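/- Suppose ν ∈ ℝ^m and μ ∈ ℝ^n have all entries strictly positive, T_E(ν,μ) is nonempty, and there exists C ⊆ I with ∑_{j∈N_{E∖E_r}(C)} μ_j > ∑_{i∈C} ν_i; let δ = δ_E(ν,μ) be the CRP-gap. Then for every ν̂ ∈ ℝ_{≥0}^m such that T_E(ν̂,μ) is nonempty and ∑_{i∈I} |ν̂_i − ν_i| < 2δ, the ERP number of T_E(ν̂,μ) is at most the ERP number of T_E(ν,μ). -/

import Mathlib

open scoped Classical

noncomputable section

variable {m n : ℕ}

/-- The transportation polytope `T_E(ν,μ)`: nonnegative `m × n` matrices with row sums `ν`,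
column sums `μ`, supported on the edge set `E`. -/
def transportationPolytope (ν : Fin m → ℝ) (μ : Fin n → ℝ)
    (E : Finset (Fin m × Fin n)) : Set (Fin m → Fin n → ℝ) :=
  {x | (∀ i j, 0 ≤ x i j) ∧ (∀ i, ∑ j, x i j = ν i) ∧
    (∀ j, ∑ i, x i j = μ j) ∧ ∀ i j, (i, j) ∉ E → x i j = 0}

/-- The neighborhood `N_F(S) = {j : ∃ i ∈ S, (i,j) ∈ F}`. -/
def nbr (F : Finset (Fin m × Fin n)) (S : Finset (Fin m)) : Finset (Fin n) :=
  Finset.univ.filter fun j => ∃ i ∈ S, (i, j) ∈ F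

/-- `ν` satisfies the capacity condition for `(μ, E)`. -/
def capacityCond (ν : Fin m → ℝ) (μ : Fin n → ℝ) (E : Finset (Fin m × Fin n)) : Prop :=
  ∀ S : Finset (Fin m), ∑ i ∈ S, ν i ≤ ∑ j ∈ nbr E S, μ j

/-- The CRP condition for `(ν, μ, E)`. -/
def crpCond (ν : Fin m → ℝ) (μ : Fin n → ℝ) (E : Finset (Fin m × Fin n)) : Prop :=
  (∑ i, ν i) = (∑ j, μ j) ∧
  ∀ S : Finset (Fin m), S.Nonempty → S ≠ Finset.univ →
    ∑ i ∈ S, ν i < ∑ j ∈ nbr E S, μ j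

/-- The bipartite simple graph `G(F)` on `I ⊔ J` determined by the edge set `F`. -/
def bipartiteGraph (F : Finset (Fin m × Fin n)) : SimpleGraph (Fin m ⊕ Fin n) :=
  SimpleGraph.fromRel fun u v => ∃ i j, u = Sum.inl i ∧ v = Sum.inr j ∧ (i, j) ∈ F

/-- The number of connected components of `G(F)`. -/
def numComponents (F : Finset (Fin m × Fin n)) : ℕ :=
  Nat.card (bipartiteGraph F).ConnectedComponent

/-- The set `E_r` of redundant edges of `T_E(ν,μ)`. -/
def redundantEdges (ν : Fin m → ℝ) (μ : Fin n → ℝ)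
    (E : Finset (Fin m × Fin n)) : Finset (Fin m × Fin n) :=
  E.filter fun e => ∀ x ∈ transportationPolytope ν μ E, x e.1 e.2 = 0

/-- The ERP number of `T_E(ν,μ)`: the number of connected components of `G(E ∖ E_r)`. -/
def erpNumber (ν : Fin m → ℝ) (μ : Fin n → ℝ) (E : Finset (Fin m × Fin n)) : ℕ :=
  numComponents (E \ redundantEdges ν μ E)

/-- The support edge set `B(x) = {(i,j) ∈ E : x_{ij} > 0}`. -/
def supportEdges (E : Finset (Fin m × Fin n)) (x : Fin m → Fin n → ℝ) :
    Finset (Fin m × Fin n) :=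
  E.filter fun e => 0 < x e.1 e.2

/-- The indicator vector `𝟙_S ∈ ℝ^m` of `S ⊆ I`. -/
def indicatorVec (S : Finset (Fin m)) : Fin m → ℝ := fun i => if i ∈ S then 1 else 0

/-- `S ⊆ I` is binding if `∑_{i∈S} ν_i = ∑_{j∈N_E(S)} μ_j`. -/
def IsBinding (ν : Fin m → ℝ) (μ : Fin n → ℝ) (E : Finset (Fin m × Fin n))
    (S : Finset (Fin m)) : Prop :=
  (∑ i ∈ S, ν i) = ∑ j ∈ nbr E S, μ j

/-- The greatest common divisor of all `m + n` components of `ν` and `μ`. -/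
def gcdVec (ν : Fin m → ℕ) (μ : Fin n → ℕ) : ℕ :=
  Nat.gcd (Finset.univ.gcd ν) (Finset.univ.gcd μ)

/-- `d_⋆ = max {1, m + n − (∑ᵢ νᵢ) / gcd(ν,μ)}`. -/
def dStar (ν : Fin m → ℕ) (μ : Fin n → ℕ) : ℕ :=
  max 1 (m + n - (∑ i, ν i) / gcdVec ν μ)

/-- The CRP-gap `δ_F(ν,μ)` of the edge set `F` (computed with respect to the redundant
edges of `T_F(ν,μ)`). -/
def crpGap (ν : Fin m → ℝ) (μ : Fin n → ℝ) (F : Finset (Fin m × Fin n)) : ℝ :=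
  sInf {t : ℝ | ∃ C : Finset (Fin m),
    (∑ i ∈ C, ν i) < (∑ j ∈ nbr (F \ redundantEdges ν μ F) C, μ j) ∧
    t = (∑ j ∈ nbr F C, μ j) - ∑ i ∈ C, ν i}

/-- The CRP-graph relation `R` on the connected components of `G(E ∖ E_r)`:
`R c₁ c₂` holds iff `c₁ ≠ c₂` and some edge `(i,j) ∈ E` has `i` in the demand side of `c₁`
and `j` in the supply side of `c₂`. -/
def crpRel (ν : Fin m → ℝ) (μ : Fin n → ℝ) (E : Finset (Fin m × Fin n)) :
    (bipartiteGraph (E \ redundantEdges ν μ E)).ConnectedComponent →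
    (bipartiteGraph (E \ redundantEdges ν μ E)).ConnectedComponent → Prop :=
  fun c₁ c₂ => c₁ ≠ c₂ ∧ ∃ i j, (i, j) ∈ E ∧
    (bipartiteGraph (E \ redundantEdges ν μ E)).connectedComponentMk (Sum.inl i) = c₁ ∧
    (bipartiteGraph (E \ redundantEdges ν μ E)).connectedComponentMk (Sum.inr j) = c₂

end

noncomputable section
namespace Stmt13

open Finset

variable {m n : ℕ}

lemma mem_nbr {E : Finset (Fin m × Fin n)} {S : Finset (Fin m)} {j : Fin n} :
    j ∈ nbr E S ↔ ∃ i ∈ S, (i, j) ∈ E := by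
  simp [nbr]

section Flows

variable {E : Finset (Fin m × Fin n)} {μ : Fin n → ℝ} {ρ : Fin m → ℝ}
  {x : Fin m → Fin n → ℝ}

lemma supp_of_mem (hx : x ∈ transportationPolytope ρ μ E) {i j} (h : x i j ≠ 0) :
    (i, j) ∈ E := by
  by_contra hc; exact h (hx.2.2.2 i j hc)

lemma mem_nonred_iff {a : Fin m} {b : Fin n} :
    (a, b) ∈ E \ redundantEdges ρ μ E ↔
      (a, b) ∈ E ∧ ∃ z ∈ transportationPolytope ρ μ E, z a b ≠ 0 := by
  simp only [Finset.mem_sdiff, redundantEdges, Finset.mem_filter]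
  constructor
  · rintro ⟨hE, hf⟩
    refine ⟨hE, ?_⟩
    by_contra hc
    push_neg at hc
    exact hf ⟨hE, hc⟩
  · rintro ⟨hE, z, hz, hzne⟩
    exact ⟨hE, fun h => hzne (h.2 z hz)⟩

lemma flow_nonred (hx : x ∈ transportationPolytope ρ μ E) {i j} (h : x i j ≠ 0) :
    (i, j) ∈ E \ redundantEdges ρ μ E :=
  mem_nonred_iff.2 ⟨supp_of_mem hx h, x, hx, h⟩

lemma row_sum_restrict (hx : x ∈ transportationPolytope ρ μ E)
    {F : Finset (Fin m × Fin n)} {S : Finset (Fin m)}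
    (hF : ∀ i ∈ S, ∀ j, x i j ≠ 0 → (i, j) ∈ F) {i : Fin m} (hi : i ∈ S) :
    ∑ j ∈ nbr F S, x i j = ρ i := by
  rw [← hx.2.1 i]
  apply Finset.sum_subset (Finset.subset_univ _)
  intro j _ hj
  by_contra h0
  exact hj (mem_nbr.2 ⟨i, hi, hF i hi j h0⟩)

lemma key_split (hx : x ∈ transportationPolytope ρ μ E)
    {F : Finset (Fin m × Fin n)} {S : Finset (Fin m)}
    (hF : ∀ i ∈ S, ∀ j, x i j ≠ 0 → (i, j) ∈ F) :
    (∑ j ∈ nbr F S, μ j) = (∑ i ∈ S, ρ i) + ∑ j ∈ nbr F S, ∑ i ∈ Sᶜ, x i j := by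
  have h1 : ∀ j ∈ nbr F S, μ j = (∑ i ∈ S, x i j) + ∑ i ∈ Sᶜ, x i j := by
    intro j _
    rw [Finset.sum_add_sum_compl, hx.2.2.1 j]
  calc ∑ j ∈ nbr F S, μ j
      = ∑ j ∈ nbr F S, ((∑ i ∈ S, x i j) + ∑ i ∈ Sᶜ, x i j) := Finset.sum_congr rfl h1
    _ = (∑ j ∈ nbr F S, ∑ i ∈ S, x i j) + ∑ j ∈ nbr F S, ∑ i ∈ Sᶜ, x i j :=
        Finset.sum_add_distrib
    _ = (∑ i ∈ S, ρ i) + ∑ j ∈ nbr F S, ∑ i ∈ Sᶜ, x i j := by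
        rw [Finset.sum_comm]
        congr 1
        exact Finset.sum_congr rfl fun i hi => row_sum_restrict hx hF hi

lemma capacity (hx : x ∈ transportationPolytope ρ μ E)
    {F : Finset (Fin m × Fin n)} {S : Finset (Fin m)}
    (hF : ∀ i ∈ S, ∀ j, x i j ≠ 0 → (i, j) ∈ F) :
    ∑ i ∈ S, ρ i ≤ ∑ j ∈ nbr F S, μ j := by
  rw [key_split hx hF]
  have : (0:ℝ) ≤ ∑ j ∈ nbr F S, ∑ i ∈ Sᶜ, x i j :=
    Finset.sum_nonneg fun j _ => Finset.sum_nonneg fun i _ => hx.1 i j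
  linarith

lemma tight_cross_zero (hx : x ∈ transportationPolytope ρ μ E)
    {F : Finset (Fin m × Fin n)} {S : Finset (Fin m)}
    (hF : ∀ i ∈ S, ∀ j, x i j ≠ 0 → (i, j) ∈ F)
    (ht : ∑ j ∈ nbr F S, μ j = ∑ i ∈ S, ρ i)
    {c : Fin m} {e : Fin n} (hc : c ∉ S) (he : e ∈ nbr F S) : x c e = 0 := by
  have h0 : ∑ j ∈ nbr F S, ∑ i ∈ Sᶜ, x i j = 0 := by
    have := key_split hx hF (S := S)
    linarith
  have h1 : ∑ i ∈ Sᶜ, x i e = 0 := by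
    refine (Finset.sum_eq_zero_iff_of_nonneg ?_).1 h0 e he
    intro j _
    exact Finset.sum_nonneg fun i _ => hx.1 i j
  exact (Finset.sum_eq_zero_iff_of_nonneg (fun i _ => hx.1 i e)).1 h1 c (by simpa using hc)

lemma totals (hx : x ∈ transportationPolytope ρ μ E) : ∑ i, ρ i = ∑ j, μ j := by
  calc ∑ i, ρ i = ∑ i, ∑ j, x i j := Finset.sum_congr rfl fun i _ => (hx.2.1 i).symm
    _ = ∑ j, ∑ i, x i j := Finset.sum_comm
    _ = ∑ j, μ j := Finset.sum_congr rfl fun j _ => hx.2.2.1 j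

end Flows


section Main

variable {E : Finset (Fin m × Fin n)} {μ : Fin n → ℝ} {ρ : Fin m → ℝ}

/-- A feasible flow with full support on the nonredundant edges. -/
lemma exists_fullsupport (hn : 1 ≤ n) (hμ : ∀ j, 0 < μ j)
    (hne' : (transportationPolytope ρ μ E).Nonempty) :
    ∃ z ∈ transportationPolytope ρ μ E,
      ∀ a b, ((a, b) ∈ E \ redundantEdges ρ μ E ↔ 0 < z a b) := by
  obtain ⟨y, hy⟩ := hne'
  have hFne : (E \ redundantEdges ρ μ E).Nonempty := by
    obtain ⟨a, _, ha⟩ : ∃ a ∈ univ, y a ⟨0, hn⟩ ≠ 0 := by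
      apply Finset.exists_ne_zero_of_sum_ne_zero
      rw [hy.2.2.1]
      exact ne_of_gt (hμ _)
    exact ⟨(a, ⟨0, hn⟩), flow_nonred hy ha⟩
  have hk : 0 < ((E \ redundantEdges ρ μ E).card : ℝ) := by
    exact_mod_cast Finset.card_pos.2 hFne
  have hw : ∀ e : Fin m × Fin n, ∃ z, z ∈ transportationPolytope ρ μ E ∧
      (e ∈ E \ redundantEdges ρ μ E → z e.1 e.2 ≠ 0) := by
    intro e
    by_cases he : e ∈ E \ redundantEdges ρ μ E
    · obtain ⟨a, b⟩ := e
      obtain ⟨z, hz, hzne⟩ := (mem_nonred_iff.1 he).2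
      exact ⟨z, hz, fun _ => hzne⟩
    · exact ⟨y, hy, fun h => absurd h he⟩
  choose w hwT hwne using hw
  set F' := E \ redundantEdges ρ μ E with hF'def
  refine ⟨fun a b => (∑ e ∈ F', w e a b) / F'.card, ⟨?_, ?_, ?_, ?_⟩, ?_⟩
  · intro i j
    exact div_nonneg (Finset.sum_nonneg fun e _ => (hwT e).1 i j) hk.le
  · intro i
    rw [← Finset.sum_div]
    rw [Finset.sum_comm]
    have : ∀ e ∈ F', ∑ j, w e i j = ρ i := fun e _ => (hwT e).2.1 i
    rw [Finset.sum_congr rfl this, Finset.sum_const, nsmul_eq_mul]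
    field_simp
  · intro j
    rw [← Finset.sum_div]
    rw [Finset.sum_comm]
    have : ∀ e ∈ F', ∑ i, w e i j = μ j := fun e _ => (hwT e).2.2.1 j
    rw [Finset.sum_congr rfl this, Finset.sum_const, nsmul_eq_mul]
    field_simp
  · intro i j hij
    dsimp only
    have : ∀ e ∈ F', w e i j = 0 := fun e _ => (hwT e).2.2.2 i j hij
    rw [Finset.sum_congr rfl this, Finset.sum_const, smul_zero, zero_div]
  · intro a b
    dsimp only
    constructor
    · intro hab
      apply div_pos ?_ hk
      apply Finset.sum_pos' (fun e _ => (hwT e).1 a b)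
      refine ⟨(a, b), hab, ?_⟩
      exact lt_of_le_of_ne ((hwT (a,b)).1 a b) (Ne.symm (hwne (a,b) hab))
    · intro hpos
      by_contra hab
      have hz : ∀ e ∈ F', w e a b = 0 := by
        intro e _
        by_cases hE : (a, b) ∈ E
        · have hred : (a, b) ∈ redundantEdges ρ μ E := by
            by_contra hr
            exact hab (Finset.mem_sdiff.2 ⟨hE, hr⟩)
          exact (Finset.mem_filter.1 hred).2 (w e) (hwT e)
        · exact (hwT e).2.2.2 a b hE
      rw [Finset.sum_congr rfl hz, Finset.sum_const, smul_zero, zero_div] at hpos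
      exact lt_irrefl 0 hpos



/-- `S` is closed w.r.t. the nonredundant edges of `(ρ, μ, E)`. -/
def closedSet (ρ : Fin m → ℝ) (μ : Fin n → ℝ) (E : Finset (Fin m × Fin n))
    (S : Finset (Fin m)) : Prop :=
  ∀ ⦃c : Fin m⦄ ⦃e : Fin n⦄, e ∈ nbr E S → (c, e) ∈ E \ redundantEdges ρ μ E → c ∈ S

/-- `S` is tight for `(ρ, μ, E)` w.r.t. the full neighborhood. -/
def tightSet (ρ : Fin m → ℝ) (μ : Fin n → ℝ) (E : Finset (Fin m × Fin n))
    (S : Finset (Fin m)) : Prop :=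
  ∑ j ∈ nbr E S, μ j = ∑ i ∈ S, ρ i

lemma closed_tight {z : Fin m → Fin n → ℝ} (hz : z ∈ transportationPolytope ρ μ E)
    (hziff : ∀ a b, ((a, b) ∈ E \ redundantEdges ρ μ E ↔ 0 < z a b))
    {S : Finset (Fin m)} (hS : closedSet ρ μ E S) : tightSet ρ μ E S := by
  have hF : ∀ i ∈ S, ∀ j, z i j ≠ 0 → (i, j) ∈ E := fun i _ j h => supp_of_mem hz h
  have hks := key_split hz hF (S := S)
  have hcross : ∑ j ∈ nbr E S, ∑ i ∈ Sᶜ, z i j = 0 := by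
    apply Finset.sum_eq_zero; intro j hj; apply Finset.sum_eq_zero; intro i hi
    by_contra h0
    have hpos : 0 < z i j := lt_of_le_of_ne (hz.1 i j) (Ne.symm h0)
    exact (Finset.mem_compl.1 hi) (hS hj ((hziff i j).2 hpos))
  rw [tightSet]; linarith

lemma tight_cross_all {S : Finset (Fin m)} (ht : tightSet ρ μ E S)
    {z : Fin m → Fin n → ℝ} (hz : z ∈ transportationPolytope ρ μ E)
    {c : Fin m} {e : Fin n} (hc : c ∉ S) (he : e ∈ nbr E S) : z c e = 0 :=
  tight_cross_zero hz (fun i _ j h => supp_of_mem hz h) ht hc he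

lemma tight_closed {S : Finset (Fin m)} (ht : tightSet ρ μ E S) :
    closedSet ρ μ E S := by
  intro c e he hce
  obtain ⟨hE, z, hz, hzne⟩ := mem_nonred_iff.1 hce
  by_contra hc
  exact hzne (tight_cross_all ht hz hc he)

lemma sum_ite_right {α : Type*} [Fintype α] [DecidableEq α] (P : Prop) [Decidable P]
    (b : α) (ε : ℝ) : ∑ x, (if P ∧ x = b then ε else 0) = if P then ε else 0 := by
  by_cases hP : P <;> simp [hP]

lemma sum_ite_left {α : Type*} [Fintype α] [DecidableEq α] (Q : Prop) [Decidable Q]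
    (a : α) (ε : ℝ) : ∑ x, (if x = a ∧ Q then ε else 0) = if Q then ε else 0 := by
  by_cases hQ : Q <;> simp [hQ]

/-- Alternating reachability from supply `b₀` through the flow `y`. -/
inductive Reach (E : Finset (Fin m × Fin n)) (y : Fin m → Fin n → ℝ) (b₀ : Fin n) :
    Fin m → Prop
  | base {a : Fin m} : 0 < y a b₀ → Reach E y b₀ a
  | step {a a' : Fin m} {b : Fin n} :
      Reach E y b₀ a → (a, b) ∈ E → 0 < y a' b → Reach E y b₀ a'

section Reach

variable {y : Fin m → Fin n → ℝ} {b₀ : Fin n} {p : ℝ}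

lemma reach_aug (hy : y ∈ transportationPolytope ρ μ E)
    (hpmin : ∀ a b, 0 < y a b → p ≤ y a b)
    {a : Fin m} (h : Reach E y b₀ a) :
    ∃ K : ℕ, ∀ ε : ℝ, 0 < ε → ε * (K + 1) ≤ p →
      ∃ z : Fin m → Fin n → ℝ,
        (∀ i j, 0 ≤ z i j) ∧ (∀ i j, (i, j) ∉ E → z i j = 0) ∧
        (∀ i, ∑ j, z i j = ρ i - if i = a then ε else 0) ∧
        (∀ j, ∑ i, z i j = μ j - if j = b₀ then ε else 0) ∧
        (∀ i j, y i j - K * ε ≤ z i j) := by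
  induction h with
  | @base a ha =>
    refine ⟨1, fun ε hε hεp => ?_⟩
    have hyab : p ≤ y a b₀ := hpmin _ _ ha
    have hE : (a, b₀) ∈ E := supp_of_mem hy (ne_of_gt ha)
    refine ⟨fun i j => y i j - if i = a ∧ j = b₀ then ε else 0, ?_, ?_, ?_, ?_, ?_⟩
    · intro i j
      by_cases hij : i = a ∧ j = b₀
      · obtain ⟨rfl, rfl⟩ := hij
        simp only [eq_self_iff_true, and_self, if_true]
        push_cast at hεp
        linarith
      · simp only [if_neg hij, sub_zero]
        exact hy.1 i j
    · intro i j hij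
      have : ¬(i = a ∧ j = b₀) := by
        rintro ⟨rfl, rfl⟩; exact hij hE
      simp only [if_neg this, sub_zero]
      exact hy.2.2.2 i j hij
    · intro i
      rw [Finset.sum_sub_distrib, hy.2.1 i, sum_ite_right (i = a) b₀ ε]
    · intro j
      rw [Finset.sum_sub_distrib, hy.2.2.1 j, sum_ite_left (j = b₀) a ε]
    · intro i j
      push_cast
      have : (if i = a ∧ j = b₀ then ε else 0) ≤ ε := by
        by_cases hij : i = a ∧ j = b₀ <;> simp [hij] <;> linarith
      linarith
  | @step a a' b _ hab hy' ih =>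
    obtain ⟨K, hK⟩ := ih
    refine ⟨K + 1, fun ε hε hεp => ?_⟩
    have hεp' : ε * (K + 1) ≤ p := by
      push_cast at hεp ⊢
      nlinarith
    obtain ⟨z, hz0, hzsupp, hzrow, hzcol, hzbd⟩ := hK ε hε hεp'
    have ha'b : (a', b) ∈ E := supp_of_mem hy (ne_of_gt hy')
    have hza'b : ε ≤ z a' b := by
      have h1 : p ≤ y a' b := hpmin _ _ hy'
      have h2 : y a' b - K * ε ≤ z a' b := hzbd a' b
      push_cast at hεp
      nlinarith
    refine ⟨fun i j =>
      z i j + (if i = a ∧ j = b then ε else 0) - (if i = a' ∧ j = b then ε else 0),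
      ?_, ?_, ?_, ?_, ?_⟩
    · intro i j
      dsimp only
      split_ifs with h1 h2 h2
      · linarith [hz0 i j]
      · linarith [hz0 i j]
      · obtain ⟨rfl, rfl⟩ := h2
        linarith [hza'b]
      · linarith [hz0 i j]
    · intro i j hij
      have h1 : ¬(i = a ∧ j = b) := by rintro ⟨rfl, rfl⟩; exact hij hab
      have h2 : ¬(i = a' ∧ j = b) := by rintro ⟨rfl, rfl⟩; exact hij ha'b
      simp only [if_neg h1, if_neg h2, add_zero, sub_zero]
      exact hzsupp i j hij
    · intro i
      rw [Finset.sum_sub_distrib, Finset.sum_add_distrib, hzrow i]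
      rw [sum_ite_right (i = a) b ε, sum_ite_right (i = a') b ε]
      by_cases hia : i = a <;> by_cases hia' : i = a' <;> simp [hia, hia'] <;> ring
    · intro j
      rw [Finset.sum_sub_distrib, Finset.sum_add_distrib, hzcol j]
      rw [sum_ite_left (j = b) a ε, sum_ite_left (j = b) a' ε]
      ring
    · intro i j
      push_cast
      have h1 : (0:ℝ) ≤ if i = a ∧ j = b then ε else 0 := by
        by_cases h' : i = a ∧ j = b <;> simp [h'] <;> linarith
      have h2 : (if i = a' ∧ j = b then ε else 0) ≤ ε := by
        by_cases h' : i = a' ∧ j = b <;> simp [h'] <;> linarith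
      have := hzbd i j
      push_cast at this
      linarith

end Reach

/-- Lemma A: a redundant edge is separated by a closed, tight set covering its supply. -/
lemma redundant_separator {y : Fin m → Fin n → ℝ}
    (hy : y ∈ transportationPolytope ρ μ E)
    {b₀ : Fin n} (hμb : 0 < μ b₀) {c : Fin m}
    (hred : (c, b₀) ∈ redundantEdges ρ μ E) :
    ∃ S : Finset (Fin m), closedSet ρ μ E S ∧ tightSet ρ μ E S ∧
      b₀ ∈ nbr E S ∧ c ∉ S := by
  classical
  -- minimum positive entry of y
  obtain ⟨a₀, -, ha₀⟩ : ∃ a ∈ univ, y a b₀ ≠ 0 := by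
    apply Finset.exists_ne_zero_of_sum_ne_zero
    rw [hy.2.2.1]
    exact ne_of_gt hμb
  have ha₀pos : 0 < y a₀ b₀ := lt_of_le_of_ne (hy.1 a₀ b₀) (Ne.symm ha₀)
  set pos : Finset (Fin m × Fin n) := univ.filter fun ab => 0 < y ab.1 ab.2 with hposdef
  have hposne : ((pos.image fun ab => y ab.1 ab.2)).Nonempty :=
    ⟨y a₀ b₀, Finset.mem_image.2 ⟨(a₀, b₀), by simp [hposdef, ha₀pos], rfl⟩⟩
  set p : ℝ := (pos.image fun ab => y ab.1 ab.2).min' hposne with hpdef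
  have hp : 0 < p := by
    obtain ⟨ab, hab, habe⟩ := Finset.mem_image.1 ((pos.image fun ab => y ab.1 ab.2).min'_mem hposne)
    rw [hpdef, ← habe]
    exact (Finset.mem_filter.1 hab).2
  have hpmin : ∀ a b, 0 < y a b → p ≤ y a b := by
    intro a b h
    exact Finset.min'_le _ _ (Finset.mem_image.2 ⟨(a, b), by simp [hposdef, h], rfl⟩)
  set S : Finset (Fin m) := univ.filter (Reach E y b₀) with hSdef
  have hScross : ∀ ⦃i j⦄, j ∈ nbr E S → 0 < y i j → i ∈ S := by
    intro i j hj hij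
    obtain ⟨a, haS, haE⟩ := mem_nbr.1 hj
    simp only [hSdef, Finset.mem_filter, Finset.mem_univ, true_and] at haS ⊢
    exact Reach.step haS haE hij
  have hb₀ : b₀ ∈ nbr E S := by
    refine mem_nbr.2 ⟨a₀, ?_, supp_of_mem hy ha₀⟩
    simp only [hSdef, Finset.mem_filter, Finset.mem_univ, true_and]
    exact Reach.base ha₀pos
  have htight : tightSet ρ μ E S := by
    have hF : ∀ i ∈ S, ∀ j, y i j ≠ 0 → (i, j) ∈ E := fun i _ j h => supp_of_mem hy h
    have hks := key_split hy hF (S := S)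
    have hcross : ∑ j ∈ nbr E S, ∑ i ∈ Sᶜ, y i j = 0 := by
      apply Finset.sum_eq_zero; intro j hj; apply Finset.sum_eq_zero; intro i hi
      by_contra h0
      exact (Finset.mem_compl.1 hi)
        (hScross hj (lt_of_le_of_ne (hy.1 i j) (Ne.symm h0)))
    rw [tightSet]; linarith
  refine ⟨S, tight_closed htight, htight, hb₀, ?_⟩
  -- if c were reachable, we could augment along the path, contradicting redundancy
  intro hcS
  have hreach : Reach E y b₀ c := by
    simpa only [hSdef, Finset.mem_filter, Finset.mem_univ, true_and] using hcS
  obtain ⟨K, hK⟩ := reach_aug hy hpmin hreach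
  have hK1 : (0:ℝ) < (K:ℝ) + 1 := by positivity
  set ε : ℝ := p / ((K:ℝ) + 1) with hεdef
  have hε : 0 < ε := div_pos hp hK1
  have hεK : ε * ((K:ℝ) + 1) ≤ p := by
    rw [hεdef, div_mul_cancel₀ _ (ne_of_gt hK1)]
  obtain ⟨z, hz0, hzsupp, hzrow, hzcol, hzbd⟩ := hK ε hε hεK
  have hcE : (c, b₀) ∈ E := (Finset.mem_filter.1 hred).1
  set z' : Fin m → Fin n → ℝ := fun i j => z i j + if i = c ∧ j = b₀ then ε else 0
    with hz'def
  have hz' : z' ∈ transportationPolytope ρ μ E := by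
    refine ⟨?_, ?_, ?_, ?_⟩
    · intro i j
      simp only [hz'def]
      split_ifs <;> [linarith [hz0 i j]; linarith [hz0 i j]]
    · intro i
      simp only [hz'def]
      rw [Finset.sum_add_distrib, hzrow i, sum_ite_right (i = c) b₀ ε]
      split_ifs <;> ring
    · intro j
      simp only [hz'def]
      rw [Finset.sum_add_distrib, hzcol j, sum_ite_left (j = b₀) c ε]
      split_ifs <;> ring
    · intro i j hij
      simp only [hz'def]
      have h1 : ¬(i = c ∧ j = b₀) := by rintro ⟨rfl, rfl⟩; exact hij hcE
      rw [hzsupp i j hij, if_neg h1, add_zero]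
  have h0 : z' c b₀ = 0 := (Finset.mem_filter.1 hred).2 z' hz'
  have : z' c b₀ = z c b₀ + ε := by
    simp [hz'def]
  rw [this] at h0
  linarith [hz0 c b₀]

/-- The minimal closed set covering a supply `e`. -/
def sigmaSet (ρ : Fin m → ℝ) (μ : Fin n → ℝ) (E : Finset (Fin m × Fin n))
    (e : Fin n) : Finset (Fin m) :=
  univ.filter fun c => ∀ S : Finset (Fin m), closedSet ρ μ E S → e ∈ nbr E S → c ∈ S

lemma mem_sigma_iff {e : Fin n} {c : Fin m} :
    c ∈ sigmaSet ρ μ E e ↔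
      ∀ S : Finset (Fin m), closedSet ρ μ E S → e ∈ nbr E S → c ∈ S := by
  simp [sigmaSet]

lemma sigma_closed {e : Fin n} : closedSet ρ μ E (sigmaSet ρ μ E e) := by
  intro c' e' he' hc'
  rw [mem_sigma_iff]
  intro S hS heS
  obtain ⟨d, hdσ, hdE⟩ := mem_nbr.1 he'
  have hdS : d ∈ S := (mem_sigma_iff.1 hdσ) S hS heS
  exact hS (mem_nbr.2 ⟨d, hdS, hdE⟩) hc'

lemma feeder_mem_sigma {e : Fin n} {c' : Fin m}
    (h : (c', e) ∈ E \ redundantEdges ρ μ E) : c' ∈ sigmaSet ρ μ E e := by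
  rw [mem_sigma_iff]
  intro S hS heS
  exact hS heS h

lemma not_mem_sigma_of_red {y : Fin m → Fin n → ℝ}
    (hy : y ∈ transportationPolytope ρ μ E)
    {e : Fin n} (hμe : 0 < μ e) {c : Fin m} (hcE : (c, e) ∈ E)
    (hcF : (c, e) ∉ E \ redundantEdges ρ μ E) : c ∉ sigmaSet ρ μ E e := by
  have hred : (c, e) ∈ redundantEdges ρ μ E := by
    by_contra hr
    exact hcF (Finset.mem_sdiff.2 ⟨hcE, hr⟩)
  obtain ⟨S, hS, -, heS, hcS⟩ := redundant_separator hy hμe hred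
  intro hσ
  exact hcS ((mem_sigma_iff.1 hσ) S hS heS)

/-- The successor relation on demands. -/
def stepRel (ρ : Fin m → ℝ) (μ : Fin n → ℝ) (E : Finset (Fin m × Fin n))
    (c c' : Fin m) : Prop :=
  ∃ e : Fin n, (c, e) ∈ E ∧ (c', e) ∈ E \ redundantEdges ρ μ E

lemma closed_upclosed {S : Finset (Fin m)} (hS : closedSet ρ μ E S) {c c' : Fin m}
    (hc : c ∈ S) (h : Relation.ReflTransGen (stepRel ρ μ E) c c') : c' ∈ S := by
  induction h with
  | refl => exact hc
  | tail _ hstep ih =>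
    obtain ⟨e, h1, h2⟩ := hstep
    exact hS (mem_nbr.2 ⟨_, ih, h1⟩) h2

lemma adj_of_mem {F : Finset (Fin m × Fin n)} {i : Fin m} {j : Fin n} (h : (i, j) ∈ F) :
    (bipartiteGraph F).Adj (Sum.inl i) (Sum.inr j) := by
  rw [bipartiteGraph, SimpleGraph.fromRel_adj]
  exact ⟨by simp, Or.inl ⟨i, j, rfl, rfl, h⟩⟩

/-- Cycle lemma: a step with a way back is realized by nonredundant edges. -/
lemma step_reachable_of_back {y : Fin m → Fin n → ℝ}
    (hy : y ∈ transportationPolytope ρ μ E) (hμ : ∀ j, 0 < μ j) {c c' : Fin m}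
    (hstep : stepRel ρ μ E c c')
    (hback : Relation.ReflTransGen (stepRel ρ μ E) c' c) :
    (bipartiteGraph (E \ redundantEdges ρ μ E)).Reachable (Sum.inl c) (Sum.inl c') := by
  obtain ⟨e, hcE, hc'⟩ := hstep
  by_cases hcF : (c, e) ∈ E \ redundantEdges ρ μ E
  · exact (adj_of_mem hcF).reachable.trans (adj_of_mem hc').reachable.symm
  · exfalso
    have h1 : c ∉ sigmaSet ρ μ E e := not_mem_sigma_of_red hy (hμ e) hcE hcF
    have h2 : c' ∈ sigmaSet ρ μ E e := feeder_mem_sigma hc'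
    exact h1 (closed_upclosed sigma_closed h2 hback)

lemma mutual_reachable {y : Fin m → Fin n → ℝ}
    (hy : y ∈ transportationPolytope ρ μ E) (hμ : ∀ j, 0 < μ j) {a a' : Fin m}
    (h : Relation.ReflTransGen (stepRel ρ μ E) a a')
    (h' : Relation.ReflTransGen (stepRel ρ μ E) a' a) :
    (bipartiteGraph (E \ redundantEdges ρ μ E)).Reachable (Sum.inl a) (Sum.inl a') := by
  revert h'
  induction h using Relation.ReflTransGen.head_induction_on with
  | refl => exact fun _ => SimpleGraph.Reachable.refl _
  | @head b c hstep hrt ih =>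
    intro hback
    have hbc : Relation.ReflTransGen (stepRel ρ μ E) a' c := hback.tail hstep
    have hcb : Relation.ReflTransGen (stepRel ρ μ E) c b := hrt.trans hback
    exact (step_reachable_of_back hy hμ hstep hcb).trans (ih hbc)



section Quant

variable {ν ν' : Fin m → ℝ}

/-- Under the TV hypothesis, every full-`E` `ν'`-tight set is also tight for `ν`
with respect to the `ν`-nonredundant neighborhood. -/
lemma tight_nu_eq (hne : (transportationPolytope ν μ E).Nonempty)
    (hne' : (transportationPolytope ν' μ E).Nonempty)
    (hTV : (∑ i, |ν' i - ν i|) < 2 * crpGap ν μ E)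
    {S : Finset (Fin m)} (ht : tightSet ν' μ E S) :
    ∑ j ∈ nbr (E \ redundantEdges ν μ E) S, μ j = ∑ i ∈ S, ν i := by
  obtain ⟨x, hx⟩ := hne
  obtain ⟨y, hy⟩ := hne'
  have hcapF : ∑ i ∈ S, ν i ≤ ∑ j ∈ nbr (E \ redundantEdges ν μ E) S, μ j :=
    capacity hx (fun i _ j h => flow_nonred hx h)
  rcases eq_or_lt_of_le hcapF with heq | hlt
  · exact heq.symm
  exfalso
  have hbdd : BddBelow {t : ℝ | ∃ C : Finset (Fin m),
      (∑ i ∈ C, ν i) < (∑ j ∈ nbr (E \ redundantEdges ν μ E) C, μ j) ∧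
      t = (∑ j ∈ nbr E C, μ j) - ∑ i ∈ C, ν i} := by
    refine ⟨0, ?_⟩
    rintro t ⟨C, hC, rfl⟩
    have := capacity hx (fun i (_ : i ∈ C) j h => supp_of_mem hx h)
    linarith
  have hmem : (∑ j ∈ nbr E S, μ j - ∑ i ∈ S, ν i) ∈ {t : ℝ | ∃ C : Finset (Fin m),
      (∑ i ∈ C, ν i) < (∑ j ∈ nbr (E \ redundantEdges ν μ E) C, μ j) ∧
      t = (∑ j ∈ nbr E C, μ j) - ∑ i ∈ C, ν i} := ⟨S, hlt, rfl⟩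
  have hδ : crpGap ν μ E ≤ ∑ j ∈ nbr E S, μ j - ∑ i ∈ S, ν i := csInf_le hbdd hmem
  have hDle : 2 * (∑ i ∈ S, ν' i - ∑ i ∈ S, ν i) ≤ ∑ i, |ν' i - ν i| := by
    have htot : ∑ i, (ν' i - ν i) = 0 := by
      rw [Finset.sum_sub_distrib, totals hy, totals hx]
      ring
    have hsplit : (∑ i ∈ S, (ν' i - ν i)) + ∑ i ∈ Sᶜ, (ν' i - ν i) = 0 := by
      rw [Finset.sum_add_sum_compl]
      exact htot
    have h1 : ∑ i ∈ S, (ν' i - ν i) ≤ ∑ i ∈ S, |ν' i - ν i| :=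
      Finset.sum_le_sum fun i _ => le_abs_self _
    have h2 : -(∑ i ∈ Sᶜ, (ν' i - ν i)) ≤ ∑ i ∈ Sᶜ, |ν' i - ν i| := by
      have h2' : ∑ i ∈ Sᶜ, -(ν' i - ν i) ≤ ∑ i ∈ Sᶜ, |ν' i - ν i| :=
        Finset.sum_le_sum fun i _ => neg_le_abs _
      simpa using h2'
    have h3 : (∑ i ∈ S, |ν' i - ν i|) + ∑ i ∈ Sᶜ, |ν' i - ν i| = ∑ i, |ν' i - ν i| :=
      Finset.sum_add_sum_compl _ _
    have h4 : ∑ i ∈ S, (ν' i - ν i) = ∑ i ∈ S, ν' i - ∑ i ∈ S, ν i :=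
      Finset.sum_sub_distrib _ _
    linarith
  have htS : ∑ j ∈ nbr E S, μ j = ∑ i ∈ S, ν' i := ht
  linarith

/-- `ν'`-tight sets are closed under the `ν`-nonredundant edges. -/
lemma tight_F_closed (hne : (transportationPolytope ν μ E).Nonempty)
    (hne' : (transportationPolytope ν' μ E).Nonempty)
    (hTV : (∑ i, |ν' i - ν i|) < 2 * crpGap ν μ E)
    {S : Finset (Fin m)} (ht : tightSet ν' μ E S) {c c' : Fin m} {b : Fin n}
    (hcb : (c, b) ∈ E \ redundantEdges ν μ E) (hc : c ∈ S)
    (hc'b : (c', b) ∈ E \ redundantEdges ν μ E) : c' ∈ S := by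
  have hf0 := tight_nu_eq hne hne' hTV ht
  obtain ⟨hE', z, hz, hzne⟩ := mem_nonred_iff.1 hc'b
  by_contra hc'S
  exact hzne (tight_cross_zero hz (fun i _ j h => flow_nonred hz h) hf0 hc'S
    (mem_nbr.2 ⟨c, hc, hcb⟩))

lemma share_RTG {z : Fin m → Fin n → ℝ} (hz : z ∈ transportationPolytope ν' μ E)
    (hziff : ∀ a b, ((a, b) ∈ E \ redundantEdges ν' μ E ↔ 0 < z a b))
    (hne : (transportationPolytope ν μ E).Nonempty)
    (hne' : (transportationPolytope ν' μ E).Nonempty)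
    (hTV : (∑ i, |ν' i - ν i|) < 2 * crpGap ν μ E)
    {a a' : Fin m} {b : Fin n}
    (hab : (a, b) ∈ E \ redundantEdges ν μ E)
    (ha'b : (a', b) ∈ E \ redundantEdges ν μ E) :
    Relation.ReflTransGen (stepRel ν' μ E) a a' := by
  set W : Finset (Fin m) :=
    univ.filter fun c => Relation.ReflTransGen (stepRel ν' μ E) a c with hWdef
  have hWclosed : closedSet ν' μ E W := by
    intro c e he hce
    obtain ⟨d, hdW, hdE⟩ := mem_nbr.1 he
    have hd := (Finset.mem_filter.1 hdW).2
    exact Finset.mem_filter.2 ⟨Finset.mem_univ _, hd.tail ⟨e, hdE, hce⟩⟩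
  have hWtight : tightSet ν' μ E W := closed_tight hz hziff hWclosed
  have haW : a ∈ W := Finset.mem_filter.2 ⟨Finset.mem_univ _, Relation.ReflTransGen.refl⟩
  have := tight_F_closed hne hne' hTV hWtight hab haW ha'b
  exact (Finset.mem_filter.1 this).2

/-- KEY: demands sharing a `ν`-nonredundant supply are connected in the
`ν'`-nonredundant graph. -/
lemma share_connected {z : Fin m → Fin n → ℝ} (hz : z ∈ transportationPolytope ν' μ E)
    (hziff : ∀ a b, ((a, b) ∈ E \ redundantEdges ν' μ E ↔ 0 < z a b))
    (hμ : ∀ j, 0 < μ j)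
    (hne : (transportationPolytope ν μ E).Nonempty)
    (hne' : (transportationPolytope ν' μ E).Nonempty)
    (hTV : (∑ i, |ν' i - ν i|) < 2 * crpGap ν μ E)
    {a a' : Fin m} {b : Fin n}
    (hab : (a, b) ∈ E \ redundantEdges ν μ E)
    (ha'b : (a', b) ∈ E \ redundantEdges ν μ E) :
    (bipartiteGraph (E \ redundantEdges ν' μ E)).Reachable (Sum.inl a) (Sum.inl a') :=
  mutual_reachable hz hμ (share_RTG hz hziff hne hne' hTV hab ha'b)
    (share_RTG hz hziff hne hne' hTV ha'b hab)

end Quant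

/-- Two demands sharing a supply in `F`. -/
def shareRel (F : Finset (Fin m × Fin n)) (c c' : Fin m) : Prop :=
  ∃ e : Fin n, (c, e) ∈ F ∧ (c', e) ∈ F

lemma adj_cases {F : Finset (Fin m × Fin n)} {u v : Fin m ⊕ Fin n}
    (h : (bipartiteGraph F).Adj u v) :
    (∃ i j, u = Sum.inl i ∧ v = Sum.inr j ∧ (i, j) ∈ F) ∨
    (∃ i j, v = Sum.inl i ∧ u = Sum.inr j ∧ (i, j) ∈ F) := by
  rw [bipartiteGraph, SimpleGraph.fromRel_adj] at h
  exact h.2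

lemma walk_chain_aux {F : Finset (Fin m × Fin n)} {u v' : Fin m ⊕ Fin n}
    (w : (bipartiteGraph F).Walk u v') :
    ∀ a' : Fin m, v' = Sum.inl a' →
    (∀ c, u = Sum.inl c → Relation.ReflTransGen (shareRel F) c a') ∧
    (∀ e c₀, u = Sum.inr e → (c₀, e) ∈ F →
      Relation.ReflTransGen (shareRel F) c₀ a') := by
  induction w with
  | nil =>
    rintro a' rfl
    constructor
    · rintro c hc
      obtain rfl : a' = c := Sum.inl.inj hc
      exact Relation.ReflTransGen.refl
    · rintro e c₀ he
      exact absurd he (by simp)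
  | @cons u v _ hadj w ih =>
    rintro a' rfl
    constructor
    · rintro c rfl
      rcases adj_cases hadj with ⟨i, j, hi, hv, hij⟩ | ⟨i, j, hv, hi, hij⟩
      · obtain rfl : c = i := Sum.inl.inj hi
        exact (ih a' rfl).2 j c hv hij
      · exact absurd hi (by simp)
    · rintro e c₀ rfl hc₀
      rcases adj_cases hadj with ⟨i, j, hi, hv, hij⟩ | ⟨i, j, hv, hi, hij⟩
      · exact absurd hi (by simp)
      · obtain rfl : e = j := Sum.inr.inj hi
        exact Relation.ReflTransGen.head ⟨e, hc₀, hij⟩ ((ih a' rfl).1 i hv)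

lemma walk_chain {F : Finset (Fin m × Fin n)} {a a' : Fin m}
    (w : (bipartiteGraph F).Walk (Sum.inl a) (Sum.inl a')) :
    Relation.ReflTransGen (shareRel F) a a' :=
  (walk_chain_aux w a' rfl).1 a rfl

lemma chain_connected {ν ν' : Fin m → ℝ} {z : Fin m → Fin n → ℝ}
    (hz : z ∈ transportationPolytope ν' μ E)
    (hziff : ∀ a b, ((a, b) ∈ E \ redundantEdges ν' μ E ↔ 0 < z a b))
    (hμ : ∀ j, 0 < μ j)
    (hne : (transportationPolytope ν μ E).Nonempty)
    (hne' : (transportationPolytope ν' μ E).Nonempty)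
    (hTV : (∑ i, |ν' i - ν i|) < 2 * crpGap ν μ E)
    {a a' : Fin m}
    (h : Relation.ReflTransGen (shareRel (E \ redundantEdges ν μ E)) a a') :
    (bipartiteGraph (E \ redundantEdges ν' μ E)).Reachable (Sum.inl a) (Sum.inl a') := by
  induction h with
  | refl => exact SimpleGraph.Reachable.refl _
  | tail hrt hshare ih =>
    obtain ⟨e, h1, h2⟩ := hshare
    exact ih.trans (share_connected hz hziff hμ hne hne' hTV h1 h2)

end Main

end Stmt13
end

/-- robustness: perturbing the demand by less than twice the CRP-gap (in total
variation) cannot increase the ERP number. -/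
theorem stmt_13 {m n : ℕ} (hm : 1 ≤ m) (hn : 1 ≤ n)
    (ν : Fin m → ℝ) (μ : Fin n → ℝ) (E : Finset (Fin m × Fin n))
    (hν : ∀ i, 0 < ν i) (hμ : ∀ j, 0 < μ j)
    (hne : (transportationPolytope ν μ E).Nonempty)
    (hC : ∃ C : Finset (Fin m),
      (∑ i ∈ C, ν i) < ∑ j ∈ nbr (E \ redundantEdges ν μ E) C, μ j) :
    ∀ ν' : Fin m → ℝ, (∀ i, 0 ≤ ν' i) →
      (transportationPolytope ν' μ E).Nonempty →
      (∑ i, |ν' i - ν i|) < 2 * crpGap ν μ E →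
      erpNumber ν' μ E ≤ erpNumber ν μ E := by
  classical
  intro ν' hν'0 hne' hTV
  obtain ⟨z, hz, hziff⟩ := Stmt13.exists_fullsupport hn hμ hne'
  set G := bipartiteGraph (E \ redundantEdges ν μ E) with hGdef
  set G' := bipartiteGraph (E \ redundantEdges ν' μ E) with hG'def
  have hrep : ∀ v : Fin m ⊕ Fin n, ∃ a : Fin m, G'.Reachable v (Sum.inl a) := by
    intro v
    cases v with
    | inl a => exact ⟨a, SimpleGraph.Reachable.refl _⟩
    | inr e =>
      obtain ⟨c₀, -, hc₀⟩ : ∃ c ∈ Finset.univ, z c e ≠ 0 := by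
        apply Finset.exists_ne_zero_of_sum_ne_zero
        rw [hz.2.2.1]
        exact ne_of_gt (hμ e)
      have hpos : 0 < z c₀ e := lt_of_le_of_ne (hz.1 c₀ e) (Ne.symm hc₀)
      exact ⟨c₀, ((Stmt13.adj_of_mem ((hziff c₀ e).2 hpos)).symm).reachable⟩
  have hrepc : ∀ K : G'.ConnectedComponent,
      ∃ a : Fin m, G'.connectedComponentMk (Sum.inl a) = K := by
    intro K
    obtain ⟨v, rfl⟩ := K.exists_rep
    obtain ⟨a, h⟩ := hrep v
    exact ⟨a, (SimpleGraph.ConnectedComponent.sound h).symm⟩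
  choose pick hpick using hrepc
  have hinj : Function.Injective (fun K : G'.ConnectedComponent =>
      G.connectedComponentMk (Sum.inl (pick K))) := by
    intro K₁ K₂ h
    have hreach : G.Reachable (Sum.inl (pick K₁)) (Sum.inl (pick K₂)) :=
      SimpleGraph.ConnectedComponent.exact h
    have hreach' : G'.Reachable (Sum.inl (pick K₁)) (Sum.inl (pick K₂)) := by
      obtain ⟨w⟩ := hreach
      exact Stmt13.chain_connected hz hziff hμ hne hne' hTV (Stmt13.walk_chain w)
    rw [← hpick K₁, ← hpick K₂]
    exact SimpleGraph.ConnectedComponent.sound hreach'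
  exact Nat.card_le_card_of_injective _ hinj
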